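/- arXiv:1311.3620 — 2 statements merged into one kernel-verified Lean document; each statement's English description precedes it below -/
import Mathlib

section
/- For every f ∈ C^{1,α}([T/2, T]) with α ∈ (0,1] and T > 0, the sup norm of the derivative satisfies ‖f'‖_∞ ≤ 4‖f‖_∞ · max( 2/T, ‖f‖_∞^{-1/(1+α)} · [f']_{C^α}^{1/(1+α)} ), where [f']_{C^α} denotes the α-Hölder seminorm of f' on [T/2, T]. -/
open Set

private lemma rpow_superadd {x y p : ℝ} (hx : 0 ≤ x) (hy : 0 ≤ y) (hp : 1 ≤ p) :
    x ^ p + y ^ p ≤ (x + y) ^ p := by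
  have h := NNReal.add_rpow_le_rpow_add ⟨x, hx⟩ ⟨y, hy⟩ hp
  have := NNReal.coe_le_coe.2 h
  exact this

/-- interpolation inequality
`‖f'‖_∞ ≤ 4‖f‖_∞ max(2/T, ‖f‖_∞^{-1/(1+α)} [f']_{C^α}^{1/(1+α)})` on `[T/2, T]`. -/
theorem stmt2 (T α : ℝ) (hT : 0 < T) (hα : α ∈ Set.Ioc (0:ℝ) 1)
    (f f' : ℝ → ℝ)
    (hderiv : ∀ t ∈ Set.Icc (T/2) T, HasDerivAt f (f' t) t)
    (Mf Mf' Hα : ℝ)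
    (hMf : IsLUB {y : ℝ | ∃ t ∈ Set.Icc (T/2) T, y = |f t|} Mf)
    (hMf' : IsLUB {y : ℝ | ∃ t ∈ Set.Icc (T/2) T, y = |f' t|} Mf')
    (hHα : IsLUB {y : ℝ | ∃ s ∈ Set.Icc (T/2) T, ∃ t ∈ Set.Icc (T/2) T,
        s ≠ t ∧ y = |f' t - f' s| / |t - s| ^ α} Hα) :
    Mf' ≤ 4 * Mf * max (2 / T) (Mf ^ (-(1 / (1 + α))) * Hα ^ (1 / (1 + α))) := by
  obtain ⟨hα0, hα1⟩ := hα
  have hT2 : T / 2 < T := by linarith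
  have hTm : T ∈ Icc (T/2) T := ⟨hT2.le, le_refl T⟩
  have hT2m : T / 2 ∈ Icc (T/2) T := ⟨le_refl _, hT2.le⟩
  have hp1 : (1:ℝ) ≤ 1 + α := by linarith
  have hp0 : (0:ℝ) < 1 + α := by linarith
  -- Mf ≥ 0
  have hMf0 : 0 ≤ Mf := le_trans (abs_nonneg (f T)) (hMf.1 ⟨T, hTm, rfl⟩)
  -- Hα ≥ 0
  have hHα0 : 0 ≤ Hα := by
    refine le_trans ?_ (hHα.1 ⟨T/2, hT2m, T, hTm, (by linarith : T/2 ≠ T), rfl⟩)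
    positivity
  -- bound on |f|
  have hfb : ∀ t ∈ Icc (T/2) T, |f t| ≤ Mf := fun t ht => hMf.1 ⟨t, ht, rfl⟩
  -- Hölder bound
  have hold : ∀ s ∈ Icc (T/2) T, ∀ t ∈ Icc (T/2) T, |f' t - f' s| ≤ Hα * |t - s| ^ α := by
    intro s hs t ht
    rcases eq_or_ne s t with rfl | hst
    · simp only [sub_self, abs_zero]
      positivity
    · have hpos : (0:ℝ) < |t - s| ^ α := by
        apply Real.rpow_pos_of_pos
        rw [abs_pos]
        exact sub_ne_zero.2 (Ne.symm hst)
      have := hHα.1 ⟨s, hs, t, ht, hst, rfl⟩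
      calc |f' t - f' s| = |f' t - f' s| / |t - s| ^ α * |t - s| ^ α := by
              field_simp
        _ ≤ Hα * |t - s| ^ α := by
              exact mul_le_mul_of_nonneg_right this hpos.le
  -- key lemma
  have key : ∀ t ∈ Icc (T/2) T, ∀ a b : ℝ, T/2 ≤ a → a ≤ t → t ≤ b → b ≤ T →
      |f' t| * (b - a) ≤ 2 * Mf + Hα * ((b - t) ^ (1+α) + (t - a) ^ (1+α)) := by
    intro t ht a b ha hat htb hbT
    have ham : a ∈ Icc (T/2) T := ⟨ha, le_trans hat (le_trans htb hbT)⟩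
    have hbm : b ∈ Icc (T/2) T := ⟨le_trans ha (le_trans hat htb), hbT⟩
    set g : ℝ → ℝ := fun x => f x - f' t * x with hg
    have hgd : ∀ x ∈ Icc (T/2) T, HasDerivAt g (f' x - f' t) x := by
      intro x hx
      exact ((hderiv x hx).sub ((hasDerivAt_id x).const_mul (f' t))).congr_deriv (by ring)
    -- right part on [t, b]
    have hright : |g b - g t| ≤ Hα * (b - t) ^ α * (b - t) := by
      have h1 : ∀ x ∈ Icc t b, HasDerivWithinAt g (f' x - f' t) (Icc t b) x := by
        intro x hx
        exact (hgd x ⟨le_trans (le_trans ha hat) hx.1, le_trans hx.2 hbT⟩).hasDerivWithinAt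
      have h2 : ∀ x ∈ Icc t b, ‖f' x - f' t‖ ≤ Hα * (b - t) ^ α := by
        intro x hx
        have hxm : x ∈ Icc (T/2) T := ⟨le_trans (le_trans ha hat) hx.1, le_trans hx.2 hbT⟩
        refine le_trans (hold t ht x hxm) ?_
        have : |x - t| ≤ b - t := by
          rw [abs_of_nonneg (by linarith [hx.1])]; linarith [hx.2]
        exact mul_le_mul_of_nonneg_left
          (Real.rpow_le_rpow (abs_nonneg _) this hα0.le) hHα0
      have := Convex.norm_image_sub_le_of_norm_hasDerivWithin_le h1 h2 (convex_Icc t b)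
        (left_mem_Icc.2 htb) (right_mem_Icc.2 htb)
      simpa [Real.norm_eq_abs, abs_of_nonneg (sub_nonneg.2 htb)] using this
    -- left part on [a, t]
    have hleft : |g t - g a| ≤ Hα * (t - a) ^ α * (t - a) := by
      have h1 : ∀ x ∈ Icc a t, HasDerivWithinAt g (f' x - f' t) (Icc a t) x := by
        intro x hx
        exact (hgd x ⟨le_trans ha hx.1, le_trans hx.2 (le_trans htb hbT)⟩).hasDerivWithinAt
      have h2 : ∀ x ∈ Icc a t, ‖f' x - f' t‖ ≤ Hα * (t - a) ^ α := by
        intro x hx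
        have hxm : x ∈ Icc (T/2) T := ⟨le_trans ha hx.1, le_trans hx.2 (le_trans htb hbT)⟩
        refine le_trans (hold t ht x hxm) ?_
        have : |x - t| ≤ t - a := by
          rw [abs_of_nonpos (by linarith [hx.2])]; linarith [hx.1]
        exact mul_le_mul_of_nonneg_left
          (Real.rpow_le_rpow (abs_nonneg _) this hα0.le) hHα0
      have := Convex.norm_image_sub_le_of_norm_hasDerivWithin_le h1 h2 (convex_Icc a t)
        (left_mem_Icc.2 hat) (right_mem_Icc.2 hat)
      simpa [Real.norm_eq_abs, abs_of_nonneg (sub_nonneg.2 hat)] using this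
    have hrw1 : (b - t) ^ (1+α) = (b - t) ^ α * (b - t) := by
      rw [Real.rpow_add' (by linarith) (by linarith), Real.rpow_one]; ring
    have hrw2 : (t - a) ^ (1+α) = (t - a) ^ α * (t - a) := by
      rw [Real.rpow_add' (by linarith) (by linarith), Real.rpow_one]; ring
    have hkey : |f' t * (b - a)| ≤ |f b - f a| + (|g b - g t| + |g t - g a|) := by
      have : f' t * (b - a) = (f b - f a) - ((g b - g t) + (g t - g a)) := by
        simp only [hg]; ring
      rw [this]
      exact le_trans (abs_sub _ _) (by gcongr; exact abs_add_le _ _)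
    have hfa : |f b - f a| ≤ 2 * Mf := by
      calc |f b - f a| ≤ |f b| + |f a| := abs_sub _ _
        _ ≤ Mf + Mf := add_le_add (hfb b hbm) (hfb a ham)
        _ = 2 * Mf := by ring
    calc |f' t| * (b - a) = |f' t * (b - a)| := by
          rw [abs_mul, abs_of_nonneg (by linarith : (0:ℝ) ≤ b - a)]
      _ ≤ |f b - f a| + (|g b - g t| + |g t - g a|) := hkey
      _ ≤ 2 * Mf + (Hα * (b - t) ^ α * (b - t) + Hα * (t - a) ^ α * (t - a)) := by
          exact add_le_add hfa (add_le_add hright hleft)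
      _ = 2 * Mf + Hα * ((b - t) ^ (1+α) + (t - a) ^ (1+α)) := by
          rw [hrw1, hrw2]; ring
  -- it suffices to bound each |f' t|
  set B := 4 * Mf * max (2 / T) (Mf ^ (-(1 / (1 + α))) * Hα ^ (1 / (1 + α))) with hB
  refine hMf'.2 ?_
  rintro y ⟨t, ht, rfl⟩
  rcases eq_or_lt_of_le hMf0 with hMfz | hMfpos
  · -- Mf = 0 : f ≡ 0 on the interval, so f' ≡ 0 there
    have hf0 : ∀ x ∈ Icc (T/2) T, f x = 0 := by
      intro x hx
      have := hfb x hx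
      rw [← hMfz] at this
      exact abs_eq_zero.1 (le_antisymm this (abs_nonneg _))
    have hft : f' t = 0 := by
      have h1 : HasDerivWithinAt f (f' t) (Icc (T/2) T) t := (hderiv t ht).hasDerivWithinAt
      have h2 : HasDerivWithinAt f 0 (Icc (T/2) T) t :=
        (hasDerivWithinAt_const t _ (0:ℝ)).congr (fun x hx => hf0 x hx) (hf0 t ht)
      exact UniqueDiffWithinAt.eq_deriv _ (uniqueDiffOn_Icc hT2 t ht) h1 h2
    have : B = 0 := by
      rw [hB, ← hMfz]; ring
    rw [hft, this, abs_zero]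
  · -- Mf > 0
    by_cases hcase : Hα * (T/2) ^ (1+α) ≤ Mf
    · -- use the whole interval
      have h1 := key t ht (T/2) T (le_refl _) ht.1 ht.2 (le_refl _)
      have hsup : (T - t) ^ (1+α) + (t - T/2) ^ (1+α) ≤ (T/2) ^ (1+α) := by
        have := rpow_superadd (sub_nonneg.2 ht.2) (sub_nonneg.2 ht.1) hp1
        have he : T - t + (t - T/2) = T/2 := by ring
        rwa [he] at this
      have h2 : |f' t| * (T - T/2) ≤ 2 * Mf + Hα * (T/2) ^ (1+α) :=
        le_trans h1 (by gcongr)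
      have h3 : |f' t| * (T/2) ≤ 3 * Mf := by
        have : T - T/2 = T/2 := by ring
        rw [this] at h2; linarith
      have h4 : |f' t| ≤ 6 * Mf / T := by
        rw [le_div_iff₀ hT]
        nlinarith
      refine le_trans h4 ?_
      calc 6 * Mf / T = 3 * Mf * (2/T) := by ring
        _ ≤ 4 * Mf * (2/T) := by
            have : (0:ℝ) < 2/T := by positivity
            nlinarith
        _ ≤ B := by
            rw [hB]
            have : (0:ℝ) ≤ 4 * Mf := by linarith
            exact mul_le_mul_of_nonneg_left (le_max_left _ _) this
    · -- use an interval of length h₀ = (Mf/Hα)^(1/(1+α))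
      push_neg at hcase
      have hHpos : 0 < Hα := by
        by_contra h
        push_neg at h
        nlinarith [Real.rpow_nonneg (by positivity : (0:ℝ) ≤ T/2) (1+α)]
      set h₀ : ℝ := (Mf / Hα) ^ (1 / (1+α)) with hh₀
      have hh₀pos : 0 < h₀ := Real.rpow_pos_of_pos (by positivity) _
      have hh₀T : h₀ < T/2 := by
        have hlt : Mf / Hα < (T/2) ^ (1+α) := by
          rw [div_lt_iff₀ hHpos]; linarith
        have := Real.rpow_lt_rpow (by positivity) hlt (by positivity : (0:ℝ) < 1/(1+α))
        rw [one_div, Real.rpow_rpow_inv (by positivity) hp0.ne'] at this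
        rw [hh₀, one_div]
        exact this
      have hpow : h₀ ^ (1+α) = Mf / Hα := by
        rw [hh₀, one_div, Real.rpow_inv_rpow (by positivity) hp0.ne']
      -- choose the interval
      set a : ℝ := min t (T - h₀) with haa
      have ha1 : T/2 ≤ a := le_min ht.1 (by linarith)
      have ha2 : a ≤ t := min_le_left _ _
      have hb1 : t ≤ a + h₀ := by
        rcases min_cases t (T - h₀) with ⟨h, _⟩ | ⟨h, _⟩
        · rw [haa, h]; linarith
        · rw [haa, h]; linarith [ht.2]
      have hb2 : a + h₀ ≤ T := by
        have : a ≤ T - h₀ := min_le_right _ _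
        linarith
      have h1 := key t ht a (a + h₀) ha1 ha2 hb1 hb2
      have hsup : (a + h₀ - t) ^ (1+α) + (t - a) ^ (1+α) ≤ h₀ ^ (1+α) := by
        have := rpow_superadd (sub_nonneg.2 hb1) (sub_nonneg.2 ha2) hp1
        have he : a + h₀ - t + (t - a) = h₀ := by ring
        rwa [he] at this
      have h2 : |f' t| * h₀ ≤ 3 * Mf := by
        have hs : a + h₀ - a = h₀ := by ring
        rw [hs] at h1
        calc |f' t| * h₀ ≤ 2 * Mf + Hα * ((a + h₀ - t) ^ (1+α) + (t - a) ^ (1+α)) := h1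
          _ ≤ 2 * Mf + Hα * (h₀ ^ (1+α)) := by gcongr
          _ = 3 * Mf := by
              rw [hpow]
              have hc : Hα * (Mf / Hα) = Mf := by field_simp
              linarith
      have h3 : |f' t| ≤ 3 * Mf / h₀ := by
        rw [le_div_iff₀ hh₀pos]; exact h2
      -- rewrite 1/h₀
      have hinv : 1 / h₀ = Mf ^ (-(1 / (1 + α))) * Hα ^ (1 / (1 + α)) := by
        rw [hh₀, Real.div_rpow hMf0 hHpos.le, Real.rpow_neg hMf0]
        field_simp
      refine le_trans h3 ?_
      have h4 : 3 * Mf / h₀ = 3 * Mf * (Mf ^ (-(1 / (1 + α))) * Hα ^ (1 / (1 + α))) := by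
        rw [← hinv]; ring
      rw [h4, hB]
      have hbr : (0:ℝ) ≤ Mf ^ (-(1 / (1 + α))) * Hα ^ (1 / (1 + α)) := by positivity
      calc 3 * Mf * (Mf ^ (-(1 / (1 + α))) * Hα ^ (1 / (1 + α)))
          ≤ 4 * Mf * (Mf ^ (-(1 / (1 + α))) * Hα ^ (1 / (1 + α))) := by nlinarith
        _ ≤ 4 * Mf * max (2 / T) (Mf ^ (-(1 / (1 + α))) * Hα ^ (1 / (1 + α))) := by
            exact mul_le_mul_of_nonneg_left (le_max_right _ _) (by linarith)
end

section
/- Let (Ω, F, P) be a probability space, T > 0, α ∈ (0,1], and let {g_φ}_{φ∈I} be a family of random functions in C^{1,α}([T/2,T]) indexed by a set I. For ε > 0 define Λ_ε = ∪_{φ∈I} { sup_{[T/2,T]} |g_φ| ≤ ε and sup_{[T/2,T]} |g_φ'| > ε^{α/(2(1+α))} }. Then there is ε₀ = ε₀(α,T) > 0 and a constant C = C(α) such that for all ε ∈ (0, ε₀): P(Λ_ε) ≤ C ε · E[ sup_{φ∈I} ‖g_φ‖_{C^{1,α}}^{2/α} ] (assuming sup_{φ∈I} ‖g_φ‖_{C^{1,α}}^{2/α}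 is measurable with finite expectation). -/
open MeasureTheory

/-- Deterministic core estimate: if `f` has `C^{1,α}` data on `[a,b]` with sup bound `ε`,
Hölder constant `N` for the derivative, and `|f'(t₀)| ≥ M`, and `t₁ ∈ [a,b]` with
`|t₁ - t₀| = h`, then `M h ≤ N h^α h + 2 ε`. -/
lemma stmt10_key {α : ℝ} {a b : ℝ} (f f' : ℝ → ℝ)
    (hd : ∀ t ∈ Set.Icc a b, HasDerivAt f (f' t) t)
    {N ε M h : ℝ} (hN : 0 ≤ N) (hαpos : 0 < α)
    (hf : ∀ t ∈ Set.Icc a b, |f t| ≤ ε)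
    (hHold : ∀ s ∈ Set.Icc a b, ∀ t ∈ Set.Icc a b, |f' t - f' s| ≤ N * |t - s| ^ α)
    {t₀ t₁ : ℝ} (ht₀ : t₀ ∈ Set.Icc a b) (ht₁ : t₁ ∈ Set.Icc a b)
    (hdist : |t₁ - t₀| = h) (hM : M ≤ |f' t₀|) :
    M * h ≤ N * h ^ α * h + 2 * ε := by
  have hh : 0 ≤ h := hdist ▸ abs_nonneg _
  set s : Set ℝ := Set.uIcc t₀ t₁ with hs
  have hsub : s ⊆ Set.Icc a b := Set.uIcc_subset_Icc ht₀ ht₁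
  have habs : ∀ t ∈ s, |t - t₀| ≤ h := by
    intro t ht
    rw [← hdist]
    rcases Set.mem_uIcc.mp ht with hc | hc <;> rcases abs_cases (t₁ - t₀) with hd' | hd' <;>
      rw [abs_le] <;>
      exact ⟨by linarith [hc.1, hc.2, hd'.1, hd'.2], by linarith [hc.1, hc.2, hd'.1, hd'.2]⟩
  have hF : ∀ t ∈ s, HasDerivWithinAt (fun u => f u - f' t₀ * u) (f' t - f' t₀) s t := by
    intro t ht
    have h1 := (hd t (hsub ht)).sub ((hasDerivAt_id t).const_mul (f' t₀))
    rw [mul_one] at h1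
    exact h1.hasDerivWithinAt
  have hbound : ∀ t ∈ s, ‖f' t - f' t₀‖ ≤ N * h ^ α := by
    intro t ht
    rw [Real.norm_eq_abs]
    calc |f' t - f' t₀| ≤ N * |t - t₀| ^ α := hHold t₀ ht₀ t (hsub ht)
    _ ≤ N * h ^ α :=
        mul_le_mul_of_nonneg_left (Real.rpow_le_rpow (abs_nonneg _) (habs t ht) hαpos.le) hN
  have hmv := (convex_uIcc t₀ t₁).norm_image_sub_le_of_norm_hasDerivWithin_le hF hbound
      Set.left_mem_uIcc Set.right_mem_uIcc
  have hmv' : |(f t₁ - f' t₀ * t₁) - (f t₀ - f' t₀ * t₀)| ≤ N * h ^ α * h := by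
    simpa [Real.norm_eq_abs, hdist] using hmv
  have key : |f' t₀ * (t₁ - t₀)| ≤ N * h ^ α * h + 2 * ε := by
    have e1 : f' t₀ * (t₁ - t₀) =
        (f t₁ - f t₀) - ((f t₁ - f' t₀ * t₁) - (f t₀ - f' t₀ * t₀)) := by ring
    have h2 : |f t₁ - f t₀| ≤ 2 * ε := by
      have := hf t₀ ht₀
      have := hf t₁ ht₁
      calc |f t₁ - f t₀| ≤ |f t₁| + |f t₀| := abs_sub _ _
      _ ≤ 2 * ε := by linarith
    calc |f' t₀ * (t₁ - t₀)|
        ≤ |f t₁ - f t₀| + |(f t₁ - f' t₀ * t₁) - (f t₀ - f' t₀ * t₀)| := by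
          rw [e1]; exact abs_sub _ _
    _ ≤ N * h ^ α * h + 2 * ε := by linarith
  calc M * h ≤ |f' t₀| * h := mul_le_mul_of_nonneg_right hM hh
  _ = |f' t₀ * (t₁ - t₀)| := by rw [abs_mul, hdist]
  _ ≤ N * h ^ α * h + 2 * ε := key

/-- probabilistic bound on the "bad set" `Λ_ε` for a family of random
`C^{1,α}` functions: `P(Λ_ε) ≤ C ε E[sup_φ ‖g_φ‖_{C^{1,α}}^{2/α}]` for small `ε`,
where the expectation of the supremum is represented by any integrable dominating
function `G`. -/
theorem stmt10 {Ω : Type*} [MeasurableSpace Ω] (P : Measure Ω) [IsProbabilityMeasure P]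
    {I : Type*} (T α : ℝ) (hT : 0 < T) (hα : α ∈ Set.Ioc (0:ℝ) 1)
    (g g' : I → Ω → ℝ → ℝ)
    (hderiv : ∀ i ω, ∀ t ∈ Set.Icc (T/2) T, HasDerivAt (g i ω) (g' i ω t) t)
    (Nrm : I → Ω → ℝ)
    (hNrm : ∀ i ω,
      (∀ t ∈ Set.Icc (T/2) T, |g i ω t| ≤ Nrm i ω) ∧
      (∀ t ∈ Set.Icc (T/2) T, |g' i ω t| ≤ Nrm i ω) ∧
      (∀ s ∈ Set.Icc (T/2) T, ∀ t ∈ Set.Icc (T/2) T,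
        |g' i ω t - g' i ω s| ≤ Nrm i ω * |t - s| ^ α)) :
    ∃ ε₀ > (0:ℝ), ∃ C > (0:ℝ), ∀ ε ∈ Set.Ioo (0:ℝ) ε₀,
      ∀ G : Ω → ℝ, Measurable G → Integrable G P →
        (∀ i ω, Nrm i ω ^ (2 / α) ≤ G ω) →
        P (⋃ i : I, {ω | (∀ t ∈ Set.Icc (T/2) T, |g i ω t| ≤ ε) ∧
            (∃ t ∈ Set.Icc (T/2) T, ε ^ (α / (2 * (1 + α))) < |g' i ω t|)})
          ≤ ENNReal.ofReal (C * ε * ∫ ω, G ω ∂P) := by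
  obtain ⟨hα0, hα1⟩ := hα
  have hαne : α ≠ 0 := hα0.ne'
  have h1α : (0:ℝ) < 1 + α := by linarith
  set β : ℝ := (2 + α) / (2 * (1 + α)) with hβ
  have hβpos : 0 < β := by positivity
  have hβ1 : α / (2 * (1 + α)) = 1 - β := by
    rw [hβ]; field_simp; ring
  set K : ℝ := (2 * 4 ^ α) ^ (2 / α) with hK
  have h4α : (0:ℝ) < 4 ^ α := Real.rpow_pos_of_pos (by norm_num) α
  have hKpos : 0 < K := Real.rpow_pos_of_pos (by positivity) _
  refine ⟨min 1 ((T / 16) ^ (1 / β)), lt_min one_pos (Real.rpow_pos_of_pos (by positivity) _),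
    K, hKpos, ?_⟩
  rintro ε ⟨hε0, hε1⟩ G hGmeas hGint hGdom
  rcases isEmpty_or_nonempty I with hI | hI
  · simp only [Set.iUnion_of_empty, measure_empty]
    exact zero_le
  -- Step 1: ε^β < T/16
  have hεβ : ε ^ β < T / 16 := by
    have h1 : ε < (T / 16) ^ (1 / β) := lt_of_lt_of_le hε1 (min_le_right _ _)
    have h2 : ε ^ β < ((T / 16) ^ (1 / β)) ^ β :=
      Real.rpow_lt_rpow hε0.le h1 hβpos
    rwa [← Real.rpow_mul (by positivity), one_div_mul_cancel hβpos.ne', Real.rpow_one] at h2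
  set M : ℝ := ε ^ (α / (2 * (1 + α))) with hM
  have hMpos : 0 < M := Real.rpow_pos_of_pos hε0 _
  have hεα : (0:ℝ) < ε ^ α := Real.rpow_pos_of_pos hε0 α
  -- Step 2: pointwise deduction on the bad set
  have hsubset : (⋃ i : I, {ω | (∀ t ∈ Set.Icc (T/2) T, |g i ω t| ≤ ε) ∧
      (∃ t ∈ Set.Icc (T/2) T, M < |g' i ω t|)}) ⊆ {ω | 1 / (K * ε) ≤ G ω} := by
    rintro ω hω
    obtain ⟨i, hsup, t₀, ht₀, ht₀'⟩ := Set.mem_iUnion.mp hω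
    obtain ⟨hN1, hN2, hN3⟩ := hNrm i ω
    set N : ℝ := Nrm i ω with hNdef
    have hNpos : 0 < N := lt_of_le_of_lt hMpos.le (lt_of_lt_of_le ht₀' (hN2 t₀ ht₀))
    set X : ℝ := (M / (2 * N)) ^ (1 / α) with hX
    have hXpos : 0 < X := Real.rpow_pos_of_pos (by positivity) _
    set h : ℝ := min (T / 4) X with hh
    have hhpos : 0 < h := lt_min (by positivity) hXpos
    have hhT : h ≤ T / 4 := min_le_left _ _
    obtain ⟨ht₀1, ht₀2⟩ := ht₀
    obtain ⟨t₁, ht₁, hdist⟩ : ∃ t₁ ∈ Set.Icc (T/2) T, |t₁ - t₀| = h := by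
      rcases le_or_gt t₀ (3 * T / 4) with hc | hc
      · exact ⟨t₀ + h, Set.mem_Icc.mpr ⟨by linarith, by linarith⟩,
          by rw [add_sub_cancel_left, abs_of_pos hhpos]⟩
      · refine ⟨t₀ - h, Set.mem_Icc.mpr ⟨by linarith, by linarith⟩, ?_⟩
        rw [sub_sub_cancel_left, abs_neg, abs_of_pos hhpos]
    -- core estimate
    have hcore : M * h ≤ N * h ^ α * h + 2 * ε :=
      stmt10_key (g i ω) (g' i ω) (hderiv i ω) hNpos.le hα0 hsup hN3
        ⟨ht₀1, ht₀2⟩ ht₁ hdist ht₀'.le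
    have hXα : X ^ α = M / (2 * N) := by
      rw [hX, ← Real.rpow_mul (by positivity), one_div_mul_cancel hαne, Real.rpow_one]
    have hhα : h ^ α ≤ M / (2 * N) := by
      rw [← hXα]
      exact Real.rpow_le_rpow hhpos.le (min_le_right _ _) hα0.le
    have hNhα : N * h ^ α ≤ M / 2 := by
      calc N * h ^ α ≤ N * (M / (2 * N)) := by gcongr
      _ = M / 2 := by field_simp
    have hhle : h ≤ 4 * ε / M := by
      rw [le_div_iff₀ hMpos]
      nlinarith [mul_le_mul_of_nonneg_right hNhα hhpos.le]
    have hTM : 4 * ε / M < T / 4 := by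
      rw [div_lt_div_iff₀ hMpos (by norm_num : (0:ℝ) < 4)]
      have hεeq : ε = ε ^ β * M := by
        rw [hM, hβ1, ← Real.rpow_add hε0, show β + (1 - β) = (1:ℝ) by ring, Real.rpow_one]
      nlinarith [hMpos, hεβ]
    have hXle : X ≤ 4 * ε / M := by
      by_contra hcon
      push_neg at hcon
      have : 4 * ε / M < h := lt_min hTM hcon
      linarith
    have h4ε : M / (2 * N) ≤ (4 * ε / M) ^ α := by
      rw [← hXα]
      exact Real.rpow_le_rpow hXpos.le hXle hα0.le
    have hMα : (0:ℝ) < M ^ α := Real.rpow_pos_of_pos hMpos α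
    have hr : (4 * ε / M) ^ α = 4 ^ α * ε ^ α / M ^ α := by
      rw [Real.div_rpow (by positivity) hMpos.le, Real.mul_rpow (by norm_num) hε0.le]
    have hMM : M * M ^ α = ε ^ (α / 2) := by
      rw [hM, ← Real.rpow_mul hε0.le, ← Real.rpow_add hε0]
      congr 1
      field_simp
    have hNlow : ε ^ (-(α / 2)) / (2 * 4 ^ α) ≤ N := by
      have hstep : M * M ^ α ≤ 4 ^ α * ε ^ α * (2 * N) := by
        rw [hr, div_le_div_iff₀ (by positivity) hMα] at h4ε
        linarith
      rw [hMM] at hstep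
      have hneg : ε ^ (-(α / 2)) = ε ^ (α / 2) / ε ^ α := by
        rw [← Real.rpow_sub hε0]; congr 1; ring
      rw [hneg, div_div, div_le_iff₀ (by positivity)]
      calc ε ^ (α / 2) ≤ 4 ^ α * ε ^ α * (2 * N) := hstep
      _ = N * (ε ^ α * (2 * 4 ^ α)) := by ring
    have hfinal : 1 / (K * ε) ≤ N ^ (2 / α) := by
      have h1 : (ε ^ (-(α / 2)) / (2 * 4 ^ α)) ^ (2 / α) ≤ N ^ (2 / α) :=
        Real.rpow_le_rpow (by positivity) hNlow (by positivity)
      have h2 : (ε ^ (-(α / 2)) / (2 * 4 ^ α)) ^ (2 / α) = ε ^ (-(1:ℝ)) / K := by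
        rw [Real.div_rpow (by positivity) (by positivity), hK, ← Real.rpow_mul hε0.le]
        congr 2
        field_simp
      rw [h2] at h1
      refine le_trans (le_of_eq ?_) h1
      rw [Real.rpow_neg_one]
      field_simp
    exact le_trans hfinal (hGdom i ω)
  -- Step 3: Markov
  have hGnonneg : ∀ ω, 0 ≤ G ω := by
    intro ω
    obtain ⟨i⟩ := hI
    refine le_trans ?_ (hGdom i ω)
    have hNnn : 0 ≤ Nrm i ω :=
      le_trans (abs_nonneg _) ((hNrm i ω).1 (T/2) ⟨le_refl _, by linarith⟩)
    exact Real.rpow_nonneg hNnn _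
  have hmarkov := mul_meas_ge_le_integral_of_nonneg (ae_of_all P hGnonneg) hGint (1 / (K * ε))
  have hKε : (0:ℝ) < K * ε := by positivity
  have hPS : (P {ω | 1 / (K * ε) ≤ G ω}).toReal ≤ K * ε * ∫ ω, G ω ∂P := by
    have h1 : (P {ω | 1 / (K * ε) ≤ G ω}).toReal
        = (K * ε) * ((1 / (K * ε)) * (P {ω | 1 / (K * ε) ≤ G ω}).toReal) := by
      field_simp
    rw [h1]
    calc (K * ε) * ((1 / (K * ε)) * (P {ω | 1 / (K * ε) ≤ G ω}).toReal)
        ≤ (K * ε) * ∫ ω, G ω ∂P := mul_le_mul_of_nonneg_left hmarkov hKε.le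
    _ = K * ε * ∫ ω, G ω ∂P := by ring
  calc P (⋃ i : I, {ω | (∀ t ∈ Set.Icc (T/2) T, |g i ω t| ≤ ε) ∧
        (∃ t ∈ Set.Icc (T/2) T, M < |g' i ω t|)})
      ≤ P {ω | 1 / (K * ε) ≤ G ω} := measure_mono hsubset
  _ = ENNReal.ofReal (P {ω | 1 / (K * ε) ≤ G ω}).toReal :=
      (ENNReal.ofReal_toReal (measure_ne_top P _)).symm
  _ ≤ ENNReal.ofReal (K * ε * ∫ ω, G ω ∂P) := ENNReal.ofReal_le_ofReal hPS
end
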